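/- Let T = 0, let a > 0, let D ∈ ℝ, and let y₀ > 0 satisfy D·y₀² + a² > 0. Then the left flight time of the Liénard system with T = 0 between the points (0, y₀) and (0, −y₀) admits the two equivalent integral expressions: ∫_{−y₀}^{y₀} a/(Dy² + a²) dy = ∫_{−y₀}^{y₀} 1/√(a² + D·(y₀² − y²)) dy (note that a² + D·(y₀² − y²) > 0 for all y ∈ [−y₀, y₀], so both integrals are well defined). -/

import Mathlib

open Set

/-- For the reversible (trace-zero) Liénard system `x' = −y`, `y' = Dx − a` with
`a > 0`, the left flight time between `(0, y₀)` and `(0, −y₀)` admits two equivalent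
integral expressions:
`∫_{−y₀}^{y₀} a/(Dy² + a²) dy = ∫_{−y₀}^{y₀} 1/√(a² + D(y₀² − y²)) dy`. -/
theorem stmt_19 (a D : ℝ) (ha : 0 < a) (y₀ : ℝ) (hy₀ : 0 < y₀)
    (hV : 0 < D * y₀ ^ 2 + a ^ 2) :
    (∫ y in (-y₀)..y₀, a / (D * y ^ 2 + a ^ 2))
      = ∫ y in (-y₀)..y₀, 1 / Real.sqrt (a ^ 2 + D * (y₀ ^ 2 - y ^ 2)) := by
  set S : ℝ → ℝ := fun u => a ^ 2 + D * (y₀ ^ 2 - u ^ 2) with hS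
  set f : ℝ → ℝ := fun u => a * u / Real.sqrt (S u) with hf
  set f' : ℝ → ℝ := fun u => a * (D * y₀ ^ 2 + a ^ 2) / Real.sqrt (S u) ^ 3 with hf'
  have hmem : ∀ u ∈ uIcc (-y₀) y₀, u ^ 2 ≤ y₀ ^ 2 := by
    intro u hu
    rw [uIcc_of_le (by linarith)] at hu
    obtain ⟨h1, h2⟩ := hu
    nlinarith
  have hSpos : ∀ u ∈ uIcc (-y₀) y₀, 0 < S u := by
    intro u hu
    have h2 := hmem u hu
    simp only [hS]
    rcases le_or_gt 0 D with hD | hD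
    · nlinarith
    · nlinarith
  have hsqrt : ∀ u ∈ uIcc (-y₀) y₀, 0 < Real.sqrt (S u) := fun u hu =>
    Real.sqrt_pos.2 (hSpos u hu)
  have hSderiv : ∀ u : ℝ, HasDerivAt S (-(2 * D * u)) u := by
    intro u
    have : HasDerivAt (fun u : ℝ => a ^ 2 + D * (y₀ ^ 2 - u ^ 2)) (D * (0 - 2 * u)) u := by
      have hu : HasDerivAt (fun u : ℝ => y₀ ^ 2 - u ^ 2) (0 - 2 * u) u := by
        exact ((hasDerivAt_const u (y₀ ^ 2)).sub (hasDerivAt_pow 2 u)).congr_deriv (by norm_num)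
      simpa using ((hu.const_mul D).const_add (a ^ 2))
    convert this using 1; ring
  have hfderiv : ∀ u ∈ uIcc (-y₀) y₀, HasDerivAt f (f' u) u := by
    intro u hu
    have hSu := hSpos u hu
    have hsu := hsqrt u hu
    have hsd : HasDerivAt (fun u => Real.sqrt (S u)) (-(2 * D * u) / (2 * Real.sqrt (S u))) u := by
      exact (hSderiv u).sqrt (ne_of_gt hSu)
    have hnum : HasDerivAt (fun u : ℝ => a * u) a u := by
      simpa using (hasDerivAt_id u).const_mul a
    have : HasDerivAt f _ u := hnum.div hsd (ne_of_gt hsu)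
    convert this using 1
    have h2 : Real.sqrt (S u) ^ 2 = S u := Real.sq_sqrt hSu.le
    simp only [hf', hS] at h2 ⊢
    set t := Real.sqrt (a ^ 2 + D * (y₀ ^ 2 - u ^ 2)) with ht
    have ht0 : t ≠ 0 := ne_of_gt hsu
    field_simp
    linear_combination (-1) * h2
  have hf'cont : ContinuousOn f' (uIcc (-y₀) y₀) := by
    apply ContinuousOn.div continuousOn_const
    · exact ((continuous_const.add (continuous_const.mul
        (continuous_const.sub (continuous_pow 2)))).sqrt.pow 3).continuousOn
    · intro u hu
      exact pow_ne_zero 3 (ne_of_gt (hsqrt u hu))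
  have hVim : ∀ y ∈ f '' uIcc (-y₀) y₀, 0 < D * y ^ 2 + a ^ 2 := by
    rintro y ⟨u, hu, rfl⟩
    have hSu := hSpos u hu
    have hsu := hsqrt u hu
    have h2 : Real.sqrt (S u) ^ 2 = S u := Real.sq_sqrt hSu.le
    have : D * (f u) ^ 2 + a ^ 2 = a ^ 2 * (D * y₀ ^ 2 + a ^ 2) / S u := by
      simp only [hf]
      rw [div_pow, mul_pow, h2]
      field_simp
      simp only [hS]
      ring
    rw [this]
    positivity
  have hgcont : ContinuousOn (fun y => a / (D * y ^ 2 + a ^ 2)) (f '' uIcc (-y₀) y₀) := by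
    apply ContinuousOn.div continuousOn_const
    · exact (continuous_const.mul (continuous_pow 2)).add continuous_const |>.continuousOn
    · intro y hy; exact ne_of_gt (hVim y hy)
  have key := intervalIntegral.integral_comp_mul_deriv' hfderiv hf'cont hgcont
  have hfa : f (-y₀) = -y₀ := by
    simp only [hf, hS]
    rw [show a ^ 2 + D * (y₀ ^ 2 - (-y₀) ^ 2) = a ^ 2 by ring, Real.sqrt_sq ha.le]
    field_simp
  have hfb : f y₀ = y₀ := by
    simp only [hf, hS]
    rw [show a ^ 2 + D * (y₀ ^ 2 - y₀ ^ 2) = a ^ 2 by ring, Real.sqrt_sq ha.le]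
    field_simp
  rw [hfa, hfb] at key
  rw [← key]
  apply intervalIntegral.integral_congr
  intro u hu
  have hSu := hSpos u hu
  have hsu := hsqrt u hu
  have h2 : Real.sqrt (S u) ^ 2 = S u := Real.sq_sqrt hSu.le
  have hVf : D * (f u) ^ 2 + a ^ 2 = a ^ 2 * (D * y₀ ^ 2 + a ^ 2) / S u := by
    simp only [hf]
    rw [div_pow, mul_pow, h2]
    field_simp
    simp only [hS]
    ring
  simp only [Function.comp_apply, hVf, hf']
  rw [div_mul_div_comm]
  rw [eq_div_iff (by positivity)]
  have h3 : Real.sqrt (S u) ^ 3 = Real.sqrt (S u) * S u := by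
    rw [pow_succ, h2]; ring
  field_simp
  rw [h3]
  ring
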